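/- Let M be a finite abelian 2-group and m ∈ M an element of order 2. Then M is isomorphic to a direct product of nontrivial cyclic groups, one of which contains m. -/

import Mathlib

open DirectSum

private lemma lemA {ι : Type*} [DecidableEq ι] {G : ι → Type*} [∀ i, AddCommGroup (G i)]
    {M : Type*} [AddCommGroup M] (φ : (⨁ i, G i) ≃+ M) :
    DirectSum.IsInternal
      (fun i => (φ.toAddMonoidHom.comp (DirectSum.of G i)).range) := by
  set H := fun i => (φ.toAddMonoidHom.comp (DirectSum.of G i)).range with hH
  have hinj : ∀ i, Function.Injective (φ.toAddMonoidHom.comp (DirectSum.of G i)) := by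
    intro i
    exact φ.injective.comp (fun a b hab => by
      simpa using congrArg (fun x => x i) hab)
  let e : ∀ i, G i ≃+ H i := fun i => AddMonoidHom.ofInjective (hinj i)
  let ψ : (⨁ i, G i) ≃+ ⨁ i, H i := DFinsupp.mapRange.addEquiv e
  have key : (DirectSum.coeAddMonoidHom H).comp ψ.toAddMonoidHom = φ.toAddMonoidHom := by
    refine DirectSum.addHom_ext (fun i x => ?_)
    have h1 : ψ (DirectSum.of G i x) = DirectSum.of (fun i => H i) i (e i x) := by
      show DFinsupp.mapRange.addEquiv e ((of G i) x) = _
      have : (of G i) x = DFinsupp.single i x := rfl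
      have h2 : (of (fun i => ↥(H i)) i) ((e i) x) = DFinsupp.single i ((e i) x) := rfl
      rw [this, h2, DFinsupp.mapRange.addEquiv]
      exact DFinsupp.mapRange_single (hf := fun j => map_zero (e j))
    simp only [AddMonoidHom.comp_apply, AddEquiv.coe_toAddMonoidHom, h1,
      DirectSum.coeAddMonoidHom_of]
    exact AddMonoidHom.ofInjective_apply (hinj i)
  have hcoe : ⇑(DirectSum.coeAddMonoidHom H) = ⇑φ ∘ ⇑ψ.symm := by
    funext x
    have := congrArg (fun f => f.toFun (ψ.symm x)) key
    simpa using this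
  rw [DirectSum.IsInternal, hcoe]
  exact φ.bijective.comp ψ.symm.bijective

private lemma lemB {N : ℕ} (hN : ∃ k, N = 2 ^ k) (z : ZMod N) (hz : z ≠ 0) (h2 : z + z = 0) :
    z = ((N / 2 : ℕ) : ZMod N) := by
  obtain ⟨k, rfl⟩ := hN
  have hk : k ≠ 0 := by
    rintro rfl
    exact hz (@Subsingleton.elim (ZMod (2^0)) (by rw [pow_zero]; infer_instance) _ _)
  haveI : NeZero (2 ^ k) := ⟨by positivity⟩
  have hval : ((z.val : ℕ) : ZMod (2 ^ k)) = z := ZMod.natCast_rightInverse z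
  have hdvd : 2 ^ k ∣ 2 * z.val := by
    have : ((2 * z.val : ℕ) : ZMod (2 ^ k)) = 0 := by
      push_cast
      rw [hval, two_mul, h2]
    exact (ZMod.natCast_eq_zero_iff _ _).mp this
  have hlt : z.val < 2 ^ k := ZMod.val_lt z
  have hne : z.val ≠ 0 := fun h => hz (by rw [← hval, h, Nat.cast_zero])
  obtain ⟨t, ht⟩ := hdvd
  have ht1 : t = 1 := by
    rcases Nat.lt_or_ge t 1 with h | h
    · interval_cases t <;> omega
    rcases Nat.lt_or_ge t 2 with h' | h'
    · omega
    · exfalso; nlinarith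
  have : z.val = 2 ^ k / 2 := by subst ht1; omega
  rw [← hval, this]

private lemma lemD {w a b : ℕ} : ((a : ℤ)) • ((b : ℕ) : ZMod w) = ((a * b : ℕ) : ZMod w) := by
  rw [zsmul_eq_mul]; push_cast; ring

private lemma lemC {a b : ℕ} (ha : ∃ s, a = 2 ^ s) (hb : ∃ t, b = 2 ^ t)
    (ha1 : 1 < a) (hab : a ∣ b) : a / 2 * (b / a) = b / 2 := by
  obtain ⟨s, rfl⟩ := ha
  obtain ⟨t, rfl⟩ := hb
  have hs : 1 ≤ s := by
    by_contra h
    interval_cases s <;> omega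
  have hst : s ≤ t := (Nat.pow_dvd_pow_iff_le_right (by norm_num)).mp hab
  have ht : 1 ≤ t := le_trans hs hst
  obtain ⟨s', rfl⟩ : ∃ s', s = s' + 1 := ⟨s - 1, by omega⟩
  obtain ⟨t', rfl⟩ : ∃ t', t = t' + 1 := ⟨t - 1, by omega⟩
  have h1 : (2:ℕ) ^ (s' + 1) / 2 = 2 ^ s' := by
    rw [pow_succ, Nat.mul_div_cancel _ (by norm_num)]
  have h3 : (2:ℕ) ^ (t' + 1) / 2 = 2 ^ t' := by
    rw [pow_succ, Nat.mul_div_cancel _ (by norm_num)]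
  have h2 : (2:ℕ) ^ (t' + 1) / 2 ^ (s' + 1) = 2 ^ (t' + 1 - (s' + 1)) :=
    Nat.pow_div hst (by norm_num)
  rw [h1, h2, h3, ← pow_add]
  congr 1
  omega



/-- A finite abelian 2-group `M` with an element `m` of order 2 decomposes as an
internal direct sum of nontrivial cyclic subgroups, one of which contains `m`. -/
theorem finite_abelian_two_group_decomposition_with_element
    (M : Type*) [AddCommGroup M] [Fintype M]
    (hM : ∃ k : ℕ, Fintype.card M = 2 ^ k)
    (m : M) (hm : addOrderOf m = 2) :
    ∃ (n : ℕ) (H : Fin n → AddSubgroup M),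
      DirectSum.IsInternal H ∧
      (∀ i, H i ≠ ⊥) ∧
      (∀ i, ∃ g : M, H i = AddSubgroup.zmultiples g) ∧
      ∃ i, m ∈ H i := by
  classical
  obtain ⟨k, hcard⟩ := hM
  obtain ⟨ι, hfι, nn, hnn, ⟨e⟩⟩ := AddCommGroup.equiv_directSum_zmod_of_finite' M
  haveI := hfι
  set n := Fintype.card ι with hn
  let q : ι ≃ Fin n := Fintype.equivFin ι
  set ν : Fin n → ℕ := fun j => nn (q.symm j) with hνdef
  have hν : ∀ j, 1 < ν j := fun j => hnn (q.symm j)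
  let e2 : M ≃+ ⨁ j : Fin n, ZMod (ν j) := e.trans (DirectSum.equivCongrLeft q)
  set c : ⨁ j : Fin n, ZMod (ν j) := e2 m with hc
  -- basic facts about m and c
  have hm2 : m + m = 0 := by
    have := addOrderOf_nsmul_eq_zero m
    rw [hm, two_nsmul] at this
    exact this
  have hc2 : ∀ j, c j + c j = 0 := by
    intro j
    have : c + c = 0 := by rw [hc, ← map_add, hm2, map_zero]
    calc c j + c j = (c + c) j := (DirectSum.add_apply _ _ _).symm
    _ = 0 := by rw [this]; rfl
  have hm0 : m ≠ 0 := by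
    intro h
    rw [h, addOrderOf_zero] at hm
    omega
  have hc0 : c ≠ 0 := fun h => hm0 (by
    have := congrArg e2.symm h
    simpa [hc] using this)
  -- each ν j is a power of 2
  have hpow : ∀ j, ∃ a, ν j = 2 ^ a := by
    intro j
    have ha := addOrderOf_injective e2.symm.toAddMonoidHom e2.symm.injective
      (DirectSum.of (fun j => ZMod (ν j)) j 1)
    have hb := addOrderOf_injective (DirectSum.of (fun j => ZMod (ν j)) j)
      (fun a b hab => by simpa using congrArg (fun x => x j) hab) (1 : ZMod (ν j))
    have h1 : addOrderOf (e2.symm (DirectSum.of (fun j => ZMod (ν j)) j 1)) = ν j :=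
      (ha.trans hb).trans (ZMod.addOrderOf_one (ν j))
    have h2 : ν j ∣ 2 ^ k := by
      rw [← h1, ← hcard]
      exact addOrderOf_dvd_card
    obtain ⟨a, _, ha⟩ := (Nat.dvd_prime_pow Nat.prime_two).mp h2
    exact ⟨a, ha⟩
  choose K hK using hpow
  -- support of c and the minimal index
  set S0 := DFinsupp.support c with hS0def
  have hS0ne : S0.Nonempty := by
    by_contra h
    apply hc0
    refine DFinsupp.ext fun j => ?_
    rw [Finset.not_nonempty_iff_eq_empty] at h
    have : j ∉ S0 := by rw [h]; exact Finset.notMem_empty j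
    simpa [hS0def] using DFinsupp.notMem_support_iff.mp this
  obtain ⟨i0, hi0S, hmin⟩ := S0.exists_min_image K hS0ne
  have hνi0 : 1 < ν i0 := hν i0
  haveI : NeZero (ν i0) := ⟨by omega⟩
  have hdvd : ∀ j ∈ S0, ν i0 ∣ ν j := fun j hj => by
    rw [hK i0, hK j]; exact pow_dvd_pow 2 (hmin j hj)
  have hcval : ∀ j ∈ S0, c j = ((ν j / 2 : ℕ) : ZMod (ν j)) := fun j hj =>
    lemB ⟨K j, hK j⟩ (c j) (DFinsupp.mem_support_iff.mp hj) (hc2 j)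
  -- the correction element d
  set d : (⨁ j : Fin n, ZMod (ν j)) := ∑ i ∈ S0.erase i0,
    DirectSum.of (fun j => ZMod (ν j)) i ((ν i / ν i0 : ℕ) : ZMod (ν i)) with hddef
  have hd : ∀ j, d j = if j ∈ S0.erase i0 then ((ν j / ν i0 : ℕ) : ZMod (ν j)) else 0 := by
    intro j
    have heval : d j = ∑ i ∈ S0.erase i0,
        (DirectSum.of (fun j => ZMod (ν j)) i ((ν i / ν i0 : ℕ) : ZMod (ν i))) j :=
      map_sum (DFinsupp.evalAddMonoidHom (β := fun j => ZMod (ν j)) j) _ _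
    by_cases hj : j ∈ S0.erase i0
    · rw [if_pos hj, heval]
      refine (Finset.sum_eq_single_of_mem j hj (fun b _ hb => ?_)).trans
        (DirectSum.of_eq_same _ _)
      exact DirectSum.of_eq_of_ne _ _ _ hb.symm
    · rw [if_neg hj, heval]
      exact Finset.sum_eq_zero fun b hb =>
        DirectSum.of_eq_of_ne _ _ _ (fun h => hj (h ▸ hb))
  have hd0 : d i0 = 0 := by
    rw [hd, if_neg (Finset.notMem_erase i0 S0)]
  have hdν : ((ν i0 : ℤ)) • d = 0 := by
    rw [hddef, Finset.smul_sum]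
    refine Finset.sum_eq_zero fun i hi => ?_
    rw [← map_zsmul]
    have : ((ν i0 : ℤ)) • (((ν i / ν i0 : ℕ) : ZMod (ν i))) = 0 := by
      have hdv : ν i0 ∣ ν i := hdvd i (Finset.mem_of_mem_erase hi)
      rw [zsmul_eq_mul]
      push_cast
      rw [← Nat.cast_mul, Nat.mul_div_cancel' hdv, ZMod.natCast_self]
    rw [this, map_zero]
  -- the homomorphism h and the shear automorphism σ
  set h : ZMod (ν i0) →+ (⨁ j : Fin n, ZMod (ν j)) := ZMod.lift (ν i0)
    ⟨zmultiplesHom _ d, by rw [zmultiplesHom_apply]; exact hdν⟩ with hhdef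
  have hcoe : ∀ a : ℕ, h ((a : ℕ) : ZMod (ν i0)) = (a : ℤ) • d := by
    intro a
    have : ((a : ℕ) : ZMod (ν i0)) = ((a : ℤ) : ZMod (ν i0)) := by push_cast; rfl
    rw [this, hhdef, ZMod.lift_coe]
    rfl
  have hhi0 : ∀ z : ZMod (ν i0), (h z) i0 = 0 := by
    intro z
    have hz : z = ((z.val : ℕ) : ZMod (ν i0)) := (ZMod.natCast_rightInverse z).symm
    rw [hz, hcoe]
    have : ((z.val : ℤ) • d) i0 = (z.val : ℤ) • (d i0) :=
      AddMonoidHom.map_zsmul (DFinsupp.evalAddMonoidHom (β := fun j => ZMod (ν j)) i0) _ d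
    rw [this, hd0, smul_zero]
  set f : (⨁ j : Fin n, ZMod (ν j)) →+ (⨁ j : Fin n, ZMod (ν j)) := h.comp (DFinsupp.evalAddMonoidHom i0) with hfdef
  have hfapp : ∀ x : ⨁ j : Fin n, ZMod (ν j), f x = h (x i0) := fun x => rfl
  have hff : ∀ x, f (f x) = 0 := by
    intro x
    rw [hfapp, hfapp, hhi0, map_zero]
  let σ : (⨁ j : Fin n, ZMod (ν j)) ≃+ (⨁ j : Fin n, ZMod (ν j)) :=
    { toFun := fun x => x + f x
      invFun := fun y => y - f y
      left_inv := fun x => by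
        show x + f x - f (x + f x) = x
        rw [map_add, hff, add_zero]; abel
      right_inv := fun y => by
        show y - f y + f (y - f y) = y
        rw [map_sub, hff, sub_zero]; abel
      map_add' := fun a b => by
        show (a + b) + f (a + b) = (a + f a) + (b + f b)
        rw [map_add]; abel }
  have hσapp : ∀ x : ⨁ j : Fin n, ZMod (ν j), σ x = x + f x := fun x => rfl
  set Ψ : (⨁ j : Fin n, ZMod (ν j)) ≃+ M := σ.trans e2.symm with hΨdef
  set H : Fin n → AddSubgroup M :=
    fun j => (Ψ.toAddMonoidHom.comp (DirectSum.of (fun j => ZMod (ν j)) j)).range with hHdef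
  have hone : ∀ j, (1 : ZMod (ν j)) ≠ 0 := by
    intro j
    haveI : Fact (1 < ν j) := ⟨hν j⟩
    exact one_ne_zero
  refine ⟨n, H, lemA Ψ, ?_, ?_, ?_⟩
  · -- nontriviality
    intro j hbot
    have h1 : Ψ (DirectSum.of (fun j => ZMod (ν j)) j 1) ∈ H j := ⟨1, rfl⟩
    rw [hbot, AddSubgroup.mem_bot] at h1
    have h2 : DirectSum.of (fun j => ZMod (ν j)) j 1 = 0 := by
      apply Ψ.injective
      rw [h1, map_zero]
    have h3 := congrArg (fun x => x j) h2
    simp only [DirectSum.of_eq_same] at h3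
    exact hone j (by simpa using h3)
  · -- cyclicity
    intro j
    refine ⟨Ψ (DirectSum.of (fun j => ZMod (ν j)) j 1), le_antisymm ?_ ?_⟩
    · rintro x ⟨z, rfl⟩
      have hz : z = z.val • (1 : ZMod (ν j)) := by
        haveI : NeZero (ν j) := ⟨by have := hν j; omega⟩
        rw [nsmul_eq_mul, mul_one]
        exact (ZMod.natCast_rightInverse z).symm
      show Ψ (DirectSum.of (fun j => ZMod (ν j)) j z) ∈ _
      rw [hz, map_nsmul, map_nsmul]
      exact AddSubgroup.nsmul_mem _ (AddSubgroup.mem_zmultiples _) _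
    · rw [AddSubgroup.zmultiples_le]
      exact ⟨1, rfl⟩
  · -- membership of m
    refine ⟨i0, ⟨c i0, ?_⟩⟩
    have hci0 : c i0 = ((ν i0 / 2 : ℕ) : ZMod (ν i0)) := hcval i0 hi0S
    have key3 : DirectSum.of (fun j => ZMod (ν j)) i0 (c i0)
        + ((ν i0 / 2 : ℕ) : ℤ) • d = c := by
      refine DFinsupp.ext fun j => ?_
      have hadd : (DirectSum.of (fun j => ZMod (ν j)) i0 (c i0)
          + ((ν i0 / 2 : ℕ) : ℤ) • d) j
          = (DirectSum.of (fun j => ZMod (ν j)) i0 (c i0)) j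
            + ((ν i0 / 2 : ℕ) : ℤ) • (d j) := by
        rw [DirectSum.add_apply]
        congr 1
      rw [hadd]
      by_cases hji : j = i0
      · subst hji
        rw [DirectSum.of_eq_same, hd0, smul_zero, add_zero]
      · rw [DirectSum.of_eq_of_ne _ _ _ hji, zero_add, hd]
        by_cases hjS : j ∈ S0
        · rw [if_pos (Finset.mem_erase.mpr ⟨hji, hjS⟩)]
          rw [lemD, lemC ⟨K i0, hK i0⟩ ⟨K j, hK j⟩ hνi0 (hdvd j hjS)]
          exact (hcval j hjS).symm
        · rw [if_neg (fun hmem => hjS (Finset.mem_of_mem_erase hmem)), smul_zero]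
          exact (DFinsupp.notMem_support_iff.mp (fun hs => hjS hs)).symm
    show Ψ (DirectSum.of (fun j => ZMod (ν j)) i0 (c i0)) = m
    rw [hΨdef]
    show e2.symm (σ (DirectSum.of (fun j => ZMod (ν j)) i0 (c i0))) = m
    rw [hσapp, hfapp, DirectSum.of_eq_same, hci0, hcoe, ← hci0, key3, hc]
    exact e2.symm_apply_apply m
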